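/- Let J = {1,…,n}, c ∈ ℝ^J and q ∈ ℝ^{J^<}, and define Γ^{c,q}(S) = ∑_{(i,j)∈S^<} q_{i,j} + ∑_{i∈S} c_i for S ⊆ J. For j ∈ J set k_j = 2c_j + ∑_{i<j} q_{i,j} + ∑_{k>j} q_{j,k}. On the vertex set V = {0,1,…,n+1}, define edge weights w by w_{{0,j}} = max(k_j, 0) and w_{{j,n+1}} = max(−k_j, 0) for j ∈ J, w_{{i,j}} = q_{i,j} for (i,j) ∈ J^<, and w_{{0,n+1}} = 0; for disjoint W, W̄ with W ∪ W̄ = V, let w(W, W̄) = ∑_{i∈W, j∈W̄} w_{{i,j}}. Then for every S ⊆ J: Γ^{c,q}(S) = −½ · w(S ∪ {0}, V \ (S ∪ {0})) + (Q + C)/2 + K/4, where Q = ∑_{(i,j)∈J^<} q_{i,j}, C = ∑_{j∈J} c_j, and K = ∑_{j∈J} |k_j|. -/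
import Mathlib


/-- `Γ^{c,q}(S) = ∑_{(i,j)∈S^<} q_{i,j} + ∑_{i∈S} c_i`. -/
noncomputable def Gamma (c : ℕ → ℝ) (q : ℕ → ℕ → ℝ) (S : Finset ℕ) : ℝ :=
  (∑ i ∈ S, ∑ j ∈ S.filter (fun j => i < j), q i j) + ∑ i ∈ S, c i

/-- `k_j = 2 c_j + ∑_{i<j} q_{i,j} + ∑_{k>j} q_{j,k}` (sums over `{1,…,n}`). -/
noncomputable def kCoef (n : ℕ) (c : ℕ → ℝ) (q : ℕ → ℕ → ℝ) (j : ℕ) : ℝ :=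
  2 * c j + (∑ i ∈ Finset.Ico 1 j, q i j) + (∑ l ∈ Finset.Icc (j + 1) n, q j l)

/-- Weight of the edge `{i,j}` of the separation graph, given for `i < j`:
`w_{{0,j}} = [k_j]^+`, `w_{{j,n+1}} = [k_j]^- = [−k_j]^+`, `w_{{i,j}} = q_{i,j}` for
`(i,j) ∈ J^<`, and `w_{{0,n+1}} = 0`. -/
noncomputable def wOrd (n : ℕ) (c : ℕ → ℝ) (q : ℕ → ℕ → ℝ) (i j : ℕ) : ℝ :=
  if i = 0 then (if j = n + 1 then 0 else max (kCoef n c q j) 0)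
  else if j = n + 1 then max (-(kCoef n c q i)) 0
  else q i j

/-- Symmetrized edge weight, for an arbitrary pair of distinct vertices. -/
noncomputable def wSym (n : ℕ) (c : ℕ → ℝ) (q : ℕ → ℕ → ℝ) (i j : ℕ) : ℝ :=
  if i < j then wOrd n c q i j else if j < i then wOrd n c q j i else 0
lemma sumswap (A B : Finset ℕ) (f : ℕ → ℕ → ℝ) :
    ∑ j ∈ A, ∑ i ∈ B.filter (fun i => i < j), f i j
      = ∑ i ∈ B, ∑ j ∈ A.filter (fun j => i < j), f i j := by
  simp_rw [Finset.sum_filter]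
  exact Finset.sum_comm

lemma max_half (a : ℝ) : max a 0 = (|a| + a) / 2 := by
  rcases le_total a 0 with h | h
  · rw [max_eq_right h, abs_of_nonpos h]; ring
  · rw [max_eq_left h, abs_of_nonneg h]; ring

theorem stmt_19' (n : ℕ) (c : ℕ → ℝ) (q : ℕ → ℕ → ℝ) :
    ∀ S ⊆ Finset.Icc 1 n,
      Gamma c q S =
        -(1 / 2) *
            (∑ i ∈ insert 0 S, ∑ j ∈ (Finset.Icc 0 (n + 1)) \ (insert 0 S),
              wSym n c q i j)
          + ((∑ i ∈ Finset.Icc 1 n, ∑ j ∈ (Finset.Icc 1 n).filter (fun j => i < j), q i j)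
              + ∑ j ∈ Finset.Icc 1 n, c j) / 2
          + (∑ j ∈ Finset.Icc 1 n, |kCoef n c q j|) / 4 := by
  intro S hS
  set J := Finset.Icc 1 n with hJ
  set T := J \ S with hT
  have hST : Disjoint S T := Finset.disjoint_sdiff
  have hmemS : ∀ x ∈ S, 1 ≤ x ∧ x ≤ n := fun x hx => Finset.mem_Icc.mp (hS hx)
  have hmemT : ∀ x ∈ T, 1 ≤ x ∧ x ≤ n := fun x hx =>
    Finset.mem_Icc.mp (Finset.sdiff_subset hx)
  have hUnion : S ∪ T = J := Finset.union_sdiff_of_subset hS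
  have h0S : (0 : ℕ) ∉ S := fun h => by have := hmemS 0 h; omega
  have h0T : (n + 1) ∉ T := fun h => by have := hmemT _ h; omega
  have hcomp : Finset.Icc 0 (n + 1) \ insert 0 S = insert (n + 1) T := by
    ext x
    simp only [Finset.mem_sdiff, Finset.mem_Icc, Finset.mem_insert, hT, hJ, not_or]
    constructor
    · rintro ⟨⟨-, hb⟩, h0, hxS⟩
      by_cases hx1 : x = n + 1
      · exact Or.inl hx1
      · exact Or.inr ⟨⟨by omega, by omega⟩, hxS⟩
    · rintro (rfl | ⟨⟨h1, h2⟩, hxS⟩)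
      · refine ⟨⟨Nat.zero_le _, le_refl _⟩, by omega, fun h => ?_⟩
        exact absurd (hmemS _ h).2 (by omega)
      · exact ⟨⟨Nat.zero_le _, by omega⟩, by omega, hxS⟩
  -- evaluate the symmetric weights on the cut
  have hwsym0top : wSym n c q 0 (n + 1) = 0 := by
    simp [wSym, wOrd]
  have hwsym0 : ∀ j ∈ T, wSym n c q 0 j = max (kCoef n c q j) 0 := by
    intro j hj
    obtain ⟨h1, h2⟩ := hmemT j hj
    have hj0 : 0 < j := by omega
    have hjn : j ≠ n + 1 := by omega
    simp [wSym, wOrd, hj0, hjn]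
  have hwsymtop : ∀ i ∈ S, wSym n c q i (n + 1) = max (-(kCoef n c q i)) 0 := by
    intro i hi
    obtain ⟨h1, h2⟩ := hmemS i hi
    have hi1 : i < n + 1 := by omega
    have hi0 : i ≠ 0 := by omega
    simp [wSym, wOrd, hi1, hi0]
  have hwsymST : ∀ i ∈ S, ∑ j ∈ T, wSym n c q i j
      = (∑ j ∈ T.filter (fun j => i < j), q i j)
        + ∑ j ∈ T.filter (fun j => j < i), q j i := by
    intro i hi
    obtain ⟨hi1, hi2⟩ := hmemS i hi
    rw [Finset.sum_filter, Finset.sum_filter, ← Finset.sum_add_distrib]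
    refine Finset.sum_congr rfl fun j hj => ?_
    obtain ⟨hj1, hj2⟩ := hmemT j hj
    have hij : i ≠ j := fun h => (Finset.disjoint_left.mp hST hi) (h ▸ hj)
    rcases lt_trichotomy i j with h | h | h
    · simp [wSym, wOrd, h, show ¬ i = 0 by omega, show ¬ j = n + 1 by omega,
        show ¬ j < i by omega]
    · exact absurd h hij
    · simp [wSym, wOrd, h, show ¬ i < j by omega, show ¬ j = 0 by omega,
        show ¬ i = n + 1 by omega]
  -- the cut value
  have hcut : (∑ i ∈ insert 0 S, ∑ j ∈ insert (n + 1) T, wSym n c q i j)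
      = (∑ j ∈ T, max (kCoef n c q j) 0) + (∑ i ∈ S, max (-(kCoef n c q i)) 0)
        + ((∑ i ∈ S, ∑ j ∈ T.filter (fun j => i < j), q i j)
          + ∑ i ∈ S, ∑ j ∈ T.filter (fun j => j < i), q j i) := by
    rw [Finset.sum_insert h0S, Finset.sum_insert h0T, hwsym0top, zero_add,
      Finset.sum_congr rfl hwsym0]
    have : ∑ i ∈ S, ∑ j ∈ insert (n + 1) T, wSym n c q i j
        = ∑ i ∈ S, (max (-(kCoef n c q i)) 0
            + ((∑ j ∈ T.filter (fun j => i < j), q i j)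
              + ∑ j ∈ T.filter (fun j => j < i), q j i)) := by
      refine Finset.sum_congr rfl fun i hi => ?_
      rw [Finset.sum_insert h0T, hwsymtop i hi, hwsymST i hi]
    rw [this, Finset.sum_add_distrib, Finset.sum_add_distrib]
    ring
  -- abbreviations for the algebra
  set A := ∑ i ∈ S, ∑ j ∈ S.filter (fun j => i < j), q i j with hA
  set B := ∑ i ∈ T, ∑ j ∈ T.filter (fun j => i < j), q i j with hB
  set X1 := ∑ i ∈ S, ∑ j ∈ T.filter (fun j => i < j), q i j with hX1
  set X2 := ∑ j ∈ S, ∑ i ∈ T.filter (fun i => i < j), q i j with hX2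
  have hsplitJ : ∀ f : ℕ → ℝ, ∑ x ∈ J, f x = ∑ x ∈ S, f x + ∑ x ∈ T, f x := by
    intro f; rw [← hUnion, Finset.sum_union hST]
  have hsplitF : ∀ (i : ℕ) (p : ℕ → Prop) [DecidablePred p] (g : ℕ → ℝ),
      ∑ j ∈ J.filter p, g j = ∑ j ∈ S.filter p, g j + ∑ j ∈ T.filter p, g j := by
    intro i p _ g
    rw [← hUnion, Finset.filter_union,
      Finset.sum_union (hST.mono (Finset.filter_subset _ _) (Finset.filter_subset _ _))]
  -- Q split
  have hQ : (∑ i ∈ J, ∑ j ∈ J.filter (fun j => i < j), q i j) = A + B + X1 + X2 := by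
    rw [hsplitJ (fun i => ∑ j ∈ J.filter (fun j => i < j), q i j)]
    have e1 : ∑ i ∈ S, ∑ j ∈ J.filter (fun j => i < j), q i j = A + X1 := by
      rw [← Finset.sum_add_distrib]
      exact Finset.sum_congr rfl fun i _ => hsplitF i _ _
    have e2 : ∑ i ∈ T, ∑ j ∈ J.filter (fun j => i < j), q i j = X2 + B := by
      have e3 : ∑ i ∈ T, ∑ j ∈ J.filter (fun j => i < j), q i j
          = (∑ i ∈ T, ∑ j ∈ S.filter (fun j => i < j), q i j) + B := by
        rw [← Finset.sum_add_distrib]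
        exact Finset.sum_congr rfl fun i _ => hsplitF i _ _
      rw [e3, ← sumswap S T q]
    rw [e1, e2]; ring
  -- expansions of k on J
  have hkexp : ∀ j ∈ J, kCoef n c q j = 2 * c j + (∑ i ∈ J.filter (fun i => i < j), q i j)
      + (∑ l ∈ J.filter (fun l => j < l), q j l) := by
    intro j hj
    obtain ⟨h1, h2⟩ := Finset.mem_Icc.mp hj
    have e1 : Finset.Ico 1 j = J.filter (fun i => i < j) := by
      ext i
      simp only [Finset.mem_Ico, Finset.mem_filter, hJ, Finset.mem_Icc]
      omega
    have e2 : Finset.Icc (j + 1) n = J.filter (fun l => j < l) := by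
      ext l
      simp only [Finset.mem_Icc, Finset.mem_filter, hJ]
      omega
    rw [kCoef, e1, e2]
  have hkS : ∑ j ∈ S, kCoef n c q j = 2 * (∑ i ∈ S, c i) + 2 * A + X1 + X2 := by
    have : ∑ j ∈ S, kCoef n c q j = ∑ j ∈ S, (2 * c j
        + (∑ i ∈ J.filter (fun i => i < j), q i j)
        + (∑ l ∈ J.filter (fun l => j < l), q j l)) :=
      Finset.sum_congr rfl fun j hj => hkexp j (hS hj)
    rw [this, Finset.sum_add_distrib, Finset.sum_add_distrib, ← Finset.mul_sum]
    have e1 : ∑ j ∈ S, ∑ i ∈ J.filter (fun i => i < j), q i j = A + X2 := by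
      have : ∑ j ∈ S, ∑ i ∈ J.filter (fun i => i < j), q i j
          = (∑ j ∈ S, ∑ i ∈ S.filter (fun i => i < j), q i j) + X2 := by
        rw [← Finset.sum_add_distrib]
        exact Finset.sum_congr rfl fun j _ => hsplitF j _ _
      rw [this, sumswap S S q]
    have e2 : ∑ j ∈ S, ∑ l ∈ J.filter (fun l => j < l), q j l = A + X1 := by
      rw [← Finset.sum_add_distrib]
      exact Finset.sum_congr rfl fun j _ => hsplitF j _ _
    rw [e1, e2]; ring
  have hkT : ∑ j ∈ T, kCoef n c q j = 2 * (∑ i ∈ T, c i) + 2 * B + X1 + X2 := by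
    have : ∑ j ∈ T, kCoef n c q j = ∑ j ∈ T, (2 * c j
        + (∑ i ∈ J.filter (fun i => i < j), q i j)
        + (∑ l ∈ J.filter (fun l => j < l), q j l)) :=
      Finset.sum_congr rfl fun j hj => hkexp j (Finset.sdiff_subset hj)
    rw [this, Finset.sum_add_distrib, Finset.sum_add_distrib, ← Finset.mul_sum]
    have e1 : ∑ j ∈ T, ∑ i ∈ J.filter (fun i => i < j), q i j = X1 + B := by
      have : ∑ j ∈ T, ∑ i ∈ J.filter (fun i => i < j), q i j
          = (∑ j ∈ T, ∑ i ∈ S.filter (fun i => i < j), q i j)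
            + ∑ j ∈ T, ∑ i ∈ T.filter (fun i => i < j), q i j := by
        rw [← Finset.sum_add_distrib]
        exact Finset.sum_congr rfl fun j _ => hsplitF j _ _
      rw [this, sumswap T S q, sumswap T T q]
    have e2 : ∑ j ∈ T, ∑ l ∈ J.filter (fun l => j < l), q j l = X2 + B := by
      have : ∑ j ∈ T, ∑ l ∈ J.filter (fun l => j < l), q j l
          = (∑ j ∈ T, ∑ l ∈ S.filter (fun l => j < l), q j l) + B := by
        rw [← Finset.sum_add_distrib]
        exact Finset.sum_congr rfl fun j _ => hsplitF j _ _
      rw [this, ← sumswap S T q]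
    rw [e1, e2]; ring
  -- split C and K
  have hC : ∑ j ∈ J, c j = (∑ j ∈ S, c j) + ∑ j ∈ T, c j := hsplitJ c
  have hK : ∑ j ∈ J, |kCoef n c q j| = (∑ j ∈ S, |kCoef n c q j|) + ∑ j ∈ T, |kCoef n c q j| :=
    hsplitJ (fun j => |kCoef n c q j|)
  -- positive/negative parts
  have hPT : ∑ j ∈ T, max (kCoef n c q j) 0 = ((∑ j ∈ T, |kCoef n c q j|) + ∑ j ∈ T, kCoef n c q j) / 2 := by
    simp only [max_half]
    rw [← Finset.sum_div, Finset.sum_add_distrib]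
  have hPS : ∑ i ∈ S, max (-(kCoef n c q i)) 0
      = ((∑ i ∈ S, |kCoef n c q i|) - ∑ i ∈ S, kCoef n c q i) / 2 := by
    simp only [max_half, abs_neg]
    rw [← Finset.sum_div, Finset.sum_add_distrib, Finset.sum_neg_distrib]
    ring
  -- finish
  rw [hcomp, hcut, hPT, hPS, hQ, hC, hK]
  simp only [Gamma, ← hA]
  linarith [hkS, hkT]


/-- for every `S ⊆ J = {1,…,n}`,
`Γ^{c,q}(S) = −½ w(S ∪ {0}, V \ (S ∪ {0})) + (Q+C)/2 + K/4`, where the cut weight is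
`w(W,W̄) = ∑_{i∈W, j∈W̄} w_{{i,j}}` on the vertex set `V = {0,1,…,n+1}`,
`Q = ∑_{(i,j)∈J^<} q_{i,j}`, `C = ∑_{j∈J} c_j` and `K = ∑_{j∈J} |k_j|`. -/
theorem stmt_19 (n : ℕ) (c : ℕ → ℝ) (q : ℕ → ℕ → ℝ) :
    ∀ S ⊆ Finset.Icc 1 n,
      Gamma c q S =
        -(1 / 2) *
            (∑ i ∈ insert 0 S, ∑ j ∈ (Finset.Icc 0 (n + 1)) \ (insert 0 S),
              wSym n c q i j)
          + ((∑ i ∈ Finset.Icc 1 n, ∑ j ∈ (Finset.Icc 1 n).filter (fun j => i < j), q i j)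
              + ∑ j ∈ Finset.Icc 1 n, c j) / 2
          + (∑ j ∈ Finset.Icc 1 n, |kCoef n c q j|) / 4 :=
  stmt_19' n c q
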